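/- arXiv:2002.06597 — 2 statements merged into one kernel-verified Lean document; each statement's English description precedes it below -/
import Mathlib

section
/- An arrangement of n hyperplanes in R^m partitions the complement of their union into at most sum_{j=0}^{m} C(n, j) connected regions. -/
open Matrix

open Finset

private lemma pascal_sum (n m : ℕ) :
    ∑ j ∈ range (m+1), (n+1).choose j
      = ∑ j ∈ range (m+1), n.choose j + ∑ j ∈ range m, n.choose j := by
  calc ∑ j ∈ range (m+1), (n+1).choose j
      = ∑ j ∈ range m, (n+1).choose (j+1) + (n+1).choose 0 := Finset.sum_range_succ' _ m
    _ = (∑ j ∈ range m, n.choose (j+1) + n.choose 0) + ∑ j ∈ range m, n.choose j := by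
        simp only [Nat.choose_succ_succ, Nat.choose_zero_right, Finset.sum_add_distrib, Nat.succ_eq_add_one]
        omega
    _ = ∑ j ∈ range (m+1), n.choose j + ∑ j ∈ range m, n.choose j := by
        rw [← Finset.sum_range_succ' (fun j => n.choose j) m]

private lemma convex_combo_pos {p q t : ℝ} (ht0 : 0 ≤ t) (ht1 : t ≤ 1)
    (hp : 0 < p) (hq : 0 < q) : 0 < (1-t)*p + t*q := by
  rcases lt_or_eq_of_le ht1 with h | h
  · nlinarith [mul_pos (show (0:ℝ) < 1 - t by linarith) hp, mul_nonneg ht0 hq.le]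
  · subst h; simpa using hq

private theorem sign_count (n : ℕ) :
    ∀ (V : Type) [AddCommGroup V] [Module ℝ V] [FiniteDimensional ℝ V]
    (m : ℕ), Module.finrank ℝ V ≤ m → ∀ f : Fin n → (V →ᵃ[ℝ] ℝ),
    Nat.card {σ : Fin n → Bool // ∃ x : V, ∀ i, if σ i then 0 < f i x else f i x < 0}
      ≤ ∑ j ∈ Finset.range (m+1), n.choose j := by
  induction n with
  | zero =>
      intro V _ _ _ m hm f
      have h1 : Nat.card {σ : Fin 0 → Bool // ∃ x : V, ∀ i, if σ i then 0 < f i x else f i x < 0}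
          ≤ Nat.card (Fin 0 → Bool) :=
        Nat.card_le_card_of_injective Subtype.val Subtype.val_injective
      have h2 : Nat.card (Fin 0 → Bool) = 1 := Nat.card_unique
      refine (h1.trans_eq h2).trans ?_
      calc 1 = Nat.choose 0 0 := rfl
        _ ≤ ∑ j ∈ Finset.range (m+1), Nat.choose 0 j :=
          Finset.single_le_sum (f := fun j => Nat.choose 0 j) (fun _ _ => Nat.zero_le _)
            (Finset.mem_range.mpr (Nat.succ_pos m))
  | succ n ih =>
      intro V _ _ _ m hm f
      classical
      set g := f (Fin.last n) with hgdef
      have restrict : ∀ σ : Fin (n+1) → Bool, (∃ x : V, ∀ i, if σ i then 0 < f i x else f i x < 0) →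
          ∃ x : V, ∀ i : Fin n, if σ i.castSucc then 0 < f i.castSucc x else f i.castSucc x < 0 := by
        rintro σ ⟨x, hx⟩; exact ⟨x, fun i => hx i.castSucc⟩
      have gdecomp : ∀ x : V, g x = g.linear x + g 0 := by
        intro x
        have hx := congrFun (AffineMap.decomp g) x
        simpa using hx
      by_cases hg : g.linear = 0
      · -- g is constant
        have gconst : ∀ x : V, g x = g 0 := by
          intro x; rw [gdecomp x, hg]; simp
        have hlast : ∀ σ : Fin (n+1) → Bool, (∃ x : V, ∀ i, if σ i then 0 < f i x else f i x < 0) →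
            σ (Fin.last n) = decide (0 < g 0) := by
          rintro σ ⟨x, hx⟩
          have h := hx (Fin.last n)
          rw [← hgdef] at h
          by_cases hσ : σ (Fin.last n) = true
          · rw [hσ] at h; simp only [if_true] at h
            rw [gconst x] at h
            rw [hσ]; simp [h]
          · have hσ' : σ (Fin.last n) = false := by revert hσ; cases σ (Fin.last n) <;> simp
            rw [hσ'] at h; simp only [Bool.false_eq_true, if_false] at h
            rw [gconst x] at h
            rw [hσ']; simp [not_lt.mpr h.le]
        have inj : Function.Injective
            (fun σ : {σ : Fin (n+1) → Bool // ∃ x : V, ∀ i, if σ i then 0 < f i x else f i x < 0} =>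
              (⟨fun i => σ.1 i.castSucc, restrict σ.1 σ.2⟩ :
                {τ : Fin n → Bool // ∃ x : V, ∀ i : Fin n, if τ i then 0 < f i.castSucc x else f i.castSucc x < 0})) := by
          rintro ⟨σ, hσ⟩ ⟨σ', hσ'⟩ h
          simp only [Subtype.mk.injEq] at h ⊢
          funext i
          refine Fin.lastCases ?_ ?_ i
          · rw [hlast σ hσ, hlast σ' hσ']
          · intro j; exact congrFun h j
        calc Nat.card {σ : Fin (n+1) → Bool // ∃ x : V, ∀ i, if σ i then 0 < f i x else f i x < 0}
            ≤ Nat.card {τ : Fin n → Bool // ∃ x : V, ∀ i : Fin n, if τ i then 0 < f i.castSucc x else f i.castSucc x < 0} :=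
              Nat.card_le_card_of_injective _ inj
          _ ≤ ∑ j ∈ Finset.range (m+1), n.choose j := ih V m hm _
          _ ≤ ∑ j ∈ Finset.range (m+1), (n+1).choose j :=
              Finset.sum_le_sum (fun j _ => Nat.choose_le_choose j (Nat.le_succ n))
      · -- g has nonzero linear part
        obtain ⟨v, hv⟩ : ∃ v : V, g.linear v ≠ 0 := by
          by_contra hc
          push_neg at hc
          exact hg (LinearMap.ext fun v => hc v)
        obtain ⟨x₀, hgx₀⟩ : ∃ x₀ : V, g x₀ = 0 := by
          refine ⟨(-(g 0) / g.linear v) • v, ?_⟩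
          rw [gdecomp, _root_.map_smul]
          rw [smul_eq_mul, div_mul_cancel₀ _ hv, neg_add_cancel]
        have hVpos : 1 ≤ Module.finrank ℝ V := by
          by_contra hc
          push_neg at hc
          interval_cases hfr : Module.finrank ℝ V
          · have : Subsingleton V := Module.finrank_zero_iff.mp hfr
            exact hv (by rw [Subsingleton.elim v 0, map_zero])
        have hm1 : 1 ≤ m := hVpos.trans hm
        obtain ⟨m', rfl⟩ : ∃ m', m = m' + 1 := ⟨m - 1, by omega⟩
        have hW : Module.finrank ℝ (LinearMap.ker g.linear) ≤ m' := by
          have hr : Module.finrank ℝ (LinearMap.range g.linear) = 1 := by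
            have hrt : LinearMap.range g.linear = ⊤ := by
              rw [LinearMap.range_eq_top]
              intro c
              exact ⟨(c / g.linear v) • v, by rw [_root_.map_smul, smul_eq_mul, div_mul_cancel₀ _ hv]⟩
            rw [hrt]
            simpa using Module.finrank_self ℝ
          have := LinearMap.finrank_range_add_finrank_ker g.linear
          omega
        obtain ⟨h, hhval⟩ : ∃ h : Fin n → ((LinearMap.ker g.linear) →ᵃ[ℝ] ℝ),
            ∀ (i : Fin n) (w : LinearMap.ker g.linear), h i w = f i.castSucc ((w : V) + x₀) := by
          refine ⟨fun i => (f i.castSucc).comp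
            ((LinearMap.ker g.linear).subtype.toAffineMap + AffineMap.const ℝ (LinearMap.ker g.linear) x₀),
            fun i w => ?_⟩
          simp
        -- doubled sign vectors occur on the hyperplane
        have key : ∀ (x y : V) (τ : Fin n → Bool), 0 < g x → g y < 0 →
            (∀ i : Fin n, if τ i then 0 < f i.castSucc x else f i.castSucc x < 0) →
            (∀ i : Fin n, if τ i then 0 < f i.castSucc y else f i.castSucc y < 0) →
            ∃ w : LinearMap.ker g.linear, ∀ i : Fin n, if τ i then 0 < h i w else h i w < 0 := by
          intro x y τ hgx hgy hx hy
          set t : ℝ := g x / (g x - g y) with htdef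
          have hden : 0 < g x - g y := by linarith
          have ht0 : 0 ≤ t := le_of_lt (div_pos hgx hden)
          have ht1 : t ≤ 1 := by
            rw [htdef, div_le_one hden]; linarith
          have hsign : ∀ (F : V →ᵃ[ℝ] ℝ), F (AffineMap.lineMap x y t) = (1 - t) * F x + t * F y := by
            intro F
            rw [AffineMap.apply_lineMap]
            simp only [AffineMap.lineMap_apply, vsub_eq_sub, vadd_eq_add, smul_eq_mul]
            ring
          set z : V := AffineMap.lineMap x y t with hzdef
          have hgz : g z = 0 := by
            rw [hzdef, hsign g, htdef]
            field_simp
            ring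
          have hzW : z - x₀ ∈ LinearMap.ker g.linear := by
            rw [LinearMap.mem_ker, map_sub]
            have h1 : g z = g.linear z + g 0 := gdecomp z
            have h2 : g x₀ = g.linear x₀ + g 0 := gdecomp x₀
            have h3 : g.linear z - g.linear x₀ = g z - g x₀ := by linarith
            rw [h3, hgz, hgx₀, sub_zero]
          refine ⟨⟨z - x₀, hzW⟩, fun i => ?_⟩
          have hφz : ((⟨z - x₀, hzW⟩ : LinearMap.ker g.linear) : V) + x₀ = z := by simp
          rw [hhval i, hφz]
          have hxi := hx i
          have hyi := hy i
          by_cases hτ : τ i = true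
          · rw [hτ] at hxi hyi ⊢
            simp only [if_true] at hxi hyi ⊢
            rw [hzdef, hsign]
            exact convex_combo_pos ht0 ht1 hxi hyi
          · have hτ' : τ i = false := by revert hτ; cases τ i <;> simp
            rw [hτ'] at hxi hyi ⊢
            simp only [Bool.false_eq_true, if_false] at hxi hyi ⊢
            rw [hzdef, hsign]
            have := convex_combo_pos ht0 ht1 (neg_pos.mpr hxi) (neg_pos.mpr hyi)
            linarith
        -- the injection
        obtain ⟨e, he⟩ : ∃ e : {σ : Fin (n+1) → Bool // ∃ x : V, ∀ i, if σ i then 0 < f i x else f i x < 0} →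
            {τ : Fin n → Bool // ∃ x : V, ∀ i : Fin n, if τ i then 0 < f i.castSucc x else f i.castSucc x < 0} ⊕
            {τ : Fin n → Bool // ∃ w : LinearMap.ker g.linear, ∀ i : Fin n, if τ i then 0 < h i w else h i w < 0},
            ∀ s, ((e s).isRight ↔ (s.1 (Fin.last n) = false ∧
                (∃ w : LinearMap.ker g.linear, ∀ i : Fin n, if s.1 i.castSucc then 0 < h i w else h i w < 0))) ∧
              (∀ l, e s = Sum.inl l → l.1 = fun i => s.1 i.castSucc) ∧
              (∀ r, e s = Sum.inr r → r.1 = fun i => s.1 i.castSucc) := by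
          classical
          refine ⟨fun s =>
            if hd : s.1 (Fin.last n) = false ∧
                (∃ w : LinearMap.ker g.linear, ∀ i : Fin n, if s.1 i.castSucc then 0 < h i w else h i w < 0)
            then Sum.inr ⟨fun i => s.1 i.castSucc, hd.2⟩
            else Sum.inl ⟨fun i => s.1 i.castSucc, restrict s.1 s.2⟩, fun s => ?_⟩
          dsimp only
          by_cases hd : s.1 (Fin.last n) = false ∧
              (∃ w : LinearMap.ker g.linear, ∀ i : Fin n, if s.1 i.castSucc then 0 < h i w else h i w < 0)
          · rw [dif_pos hd]
            refine ⟨by simpa using hd, fun l hl => by simp at hl, fun r hr => ?_⟩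
            rw [← Sum.inr.inj hr]
          · rw [dif_neg hd]
            refine ⟨by simpa using hd, fun l hl => ?_, fun r hr => by simp at hr⟩
            rw [← Sum.inl.inj hl]
        have einj : Function.Injective e := by
          rintro ⟨σ, hσ⟩ ⟨σ', hσ'⟩ hee
          have ext_of : (∀ j : Fin n, σ j.castSucc = σ' j.castSucc) → σ (Fin.last n) = σ' (Fin.last n) →
              (⟨σ,hσ⟩ : {σ : Fin (n+1) → Bool // ∃ x : V, ∀ i, if σ i then 0 < f i x else f i x < 0}) = ⟨σ',hσ'⟩ := by
            intro h1 h2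
            exact Subtype.ext (funext fun i => Fin.lastCases h2 h1 i)
          have main : ∀ (σ₁ σ₂ : Fin (n+1) → Bool), (∃ x : V, ∀ i, if σ₁ i then 0 < f i x else f i x < 0) →
              (∃ x : V, ∀ i, if σ₂ i then 0 < f i x else f i x < 0) →
              (∀ j : Fin n, σ₁ j.castSucc = σ₂ j.castSucc) →
              σ₁ (Fin.last n) = true → σ₂ (Fin.last n) = false →
              (∃ w : LinearMap.ker g.linear, ∀ i : Fin n, if σ₂ i.castSucc then 0 < h i w else h i w < 0) := by
            rintro σ₁ σ₂ ⟨x, hx⟩ ⟨y, hy⟩ hres12 hl1 hl2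
            have hgx : 0 < g x := by
              have := hx (Fin.last n); rw [hl1] at this; simpa [← hgdef] using this
            have hgy : g y < 0 := by
              have := hy (Fin.last n); rw [hl2] at this; simpa [← hgdef] using this
            exact key x y (fun i => σ₂ i.castSucc) hgx hgy
              (fun i => by simpa only [← hres12 i] using hx i.castSucc)
              (fun i => by simpa using hy i.castSucc)
          obtain ⟨hiso, hinl, hinr⟩ := he ⟨σ, hσ⟩
          obtain ⟨hiso', hinl', hinr'⟩ := he ⟨σ', hσ'⟩
          rcases hes : e ⟨σ, hσ⟩ with l | r
          · rw [hes] at hee hiso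
            have hes' := hee.symm
            rw [hes'] at hiso'
            simp only [Sum.isRight_inl, Bool.false_eq_true, false_iff] at hiso hiso'
            have hres : ∀ j : Fin n, σ j.castSucc = σ' j.castSucc := by
              have e1 := hinl l hes
              have e2 := hinl' l hes'
              intro j
              exact (congrFun e1 j).symm.trans (congrFun e2 j)
            refine ext_of hres ?_
            by_contra hne
            by_cases hσl : σ (Fin.last n) = true
            · have hσ'l : σ' (Fin.last n) = false := by
                revert hne; rw [hσl]; cases σ' (Fin.last n) <;> simp
              exact hiso' ⟨hσ'l, main σ σ' hσ hσ' hres hσl hσ'l⟩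
            · have hσl' : σ (Fin.last n) = false := by revert hσl; cases σ (Fin.last n) <;> simp
              have hσ'l : σ' (Fin.last n) = true := by
                revert hne; rw [hσl']; cases σ' (Fin.last n) <;> simp
              exact hiso ⟨hσl', main σ' σ hσ' hσ (fun j => (hres j).symm) hσ'l hσl'⟩
          · rw [hes] at hee hiso
            have hes' := hee.symm
            rw [hes'] at hiso'
            simp only [Sum.isRight_inr, true_iff] at hiso hiso'
            have hres : ∀ j : Fin n, σ j.castSucc = σ' j.castSucc := by
              have e1 := hinr r hes
              have e2 := hinr' r hes'
              intro j
              exact (congrFun e1 j).symm.trans (congrFun e2 j)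
            exact ext_of hres (by rw [hiso.1, hiso'.1])
        have hcard := Nat.card_le_card_of_injective e einj
        rw [Nat.card_sum] at hcard
        have hT : Nat.card {τ : Fin n → Bool // ∃ x : V, ∀ i : Fin n, if τ i then 0 < f i.castSucc x else f i.castSucc x < 0}
            ≤ ∑ j ∈ Finset.range (m'+1+1), n.choose j := ih V (m'+1) hm _
        have hD : Nat.card {τ : Fin n → Bool // ∃ w : LinearMap.ker g.linear, ∀ i : Fin n, if τ i then 0 < h i w else h i w < 0}
            ≤ ∑ j ∈ Finset.range (m'+1), n.choose j := by
          exact ih ↥(LinearMap.ker g.linear) m' hW h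
        calc Nat.card {σ : Fin (n+1) → Bool // ∃ x : V, ∀ i, if σ i then 0 < f i x else f i x < 0}
            ≤ _ + _ := hcard
          _ ≤ ∑ j ∈ Finset.range (m'+1+1), n.choose j + ∑ j ∈ Finset.range (m'+1), n.choose j :=
              Nat.add_le_add hT hD
          _ = ∑ j ∈ Finset.range (m'+1+1), (n+1).choose j := (pascal_sum n (m'+1)).symm


/-- **Zaslavsky's bound.** An arrangement of `n` hyperplanes in `ℝ^m` partitions the
complement of their union into at most `∑_{j=0}^{m} C(n, j)` connected regions. -/
theorem hyperplane_arrangement_region_bound (m n : ℕ)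
    (a : Fin n → (Fin m → ℝ)) (b : Fin n → ℝ) (ha : ∀ i, a i ≠ 0) :
    Nat.card (ConnectedComponents {x : Fin m → ℝ | ∀ i, a i ⬝ᵥ x ≠ b i}) ≤
      ∑ j ∈ Finset.range (m + 1), n.choose j := by
  classical
  set U : Set (Fin m → ℝ) := {x : Fin m → ℝ | ∀ i, a i ⬝ᵥ x ≠ b i} with hUdef
  have hlin : ∀ i, IsLinearMap ℝ (fun x : Fin m → ℝ => a i ⬝ᵥ x) := fun i =>
    ⟨fun x y => dotProduct_add _ _ _, fun c x => dotProduct_smul _ _ _⟩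
  obtain ⟨f, hfval⟩ : ∃ f : Fin n → ((Fin m → ℝ) →ᵃ[ℝ] ℝ), ∀ i x, f i x = a i ⬝ᵥ x - b i := by
    refine ⟨fun i => (IsLinearMap.mk' _ (hlin i)).toAffineMap + AffineMap.const ℝ _ (-(b i)),
      fun i x => ?_⟩
    simp [sub_eq_add_neg]
  -- sign vector of a point of U
  have hsign : ∀ x : U, ∀ i, if decide (b i < a i ⬝ᵥ (x : Fin m → ℝ)) then 0 < f i (x : Fin m → ℝ)
      else f i (x : Fin m → ℝ) < 0 := by
    rintro ⟨x, hx⟩ i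
    by_cases hi : b i < a i ⬝ᵥ x
    · have hd : decide (b i < a i ⬝ᵥ x) = true := decide_eq_true hi
      rw [hd, if_pos rfl, hfval]; linarith
    · have hlt : a i ⬝ᵥ x < b i := lt_of_le_of_ne (not_lt.mp hi) (hx i)
      have hd : decide (b i < a i ⬝ᵥ x) = false := decide_eq_false hi
      rw [hd]
      simp only [Bool.false_eq_true, if_false]
      rw [hfval]; linarith
  -- the map from components to realizable sign vectors
  have hrep : ∀ C : ConnectedComponents U, ∃ x : U, ConnectedComponents.mk x = C :=
    fun C => ConnectedComponents.surjective_coe C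
  set rep : ConnectedComponents U → U := fun C => (hrep C).choose with hrepdef
  have hrepspec : ∀ C, ConnectedComponents.mk (rep C) = C := fun C => (hrep C).choose_spec
  set F : ConnectedComponents U →
      {σ : Fin n → Bool // ∃ x : Fin m → ℝ, ∀ i, if σ i then 0 < f i x else f i x < 0} :=
    fun C => ⟨fun i => decide (b i < a i ⬝ᵥ ((rep C : U) : Fin m → ℝ)),
      ⟨((rep C : U) : Fin m → ℝ), hsign (rep C)⟩⟩ with hFdef
  have hFinj : Function.Injective F := by
    intro C C' hFF
    set σ : Fin n → Bool := fun i => decide (b i < a i ⬝ᵥ ((rep C : U) : Fin m → ℝ)) with hσdef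
    have hσ' : ∀ i, decide (b i < a i ⬝ᵥ ((rep C' : U) : Fin m → ℝ)) = σ i := by
      intro i
      exact (congrFun (congrArg Subtype.val hFF) i).symm
    -- the convex sign cell
    set A : Set (Fin m → ℝ) :=
      ⋂ i, (if σ i then {z : Fin m → ℝ | b i < a i ⬝ᵥ z} else {z : Fin m → ℝ | a i ⬝ᵥ z < b i})
      with hAdef
    have hconv : Convex ℝ A := by
      refine convex_iInter fun i => ?_
      by_cases hsi : σ i = true
      · rw [hsi, if_pos rfl]
        exact convex_halfSpace_gt (hlin i) (b i)
      · rw [if_neg (by simpa using hsi)]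
        exact convex_halfSpace_lt (hlin i) (b i)
    have hAU : A ⊆ U := by
      intro z hz
      intro i
      have hzi := Set.mem_iInter.mp hz i
      by_cases hsi : σ i = true
      · rw [hsi, if_pos rfl] at hzi
        exact ne_of_gt hzi
      · rw [if_neg (by simpa using hsi)] at hzi
        exact ne_of_lt hzi
    have hmemA : ∀ (x : U), (∀ i, decide (b i < a i ⬝ᵥ (x : Fin m → ℝ)) = σ i) →
        (x : Fin m → ℝ) ∈ A := by
      rintro ⟨x, hx⟩ hdx
      refine Set.mem_iInter.mpr fun i => ?_
      by_cases hsi : σ i = true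
      · rw [hsi, if_pos rfl]
        have := hdx i
        rw [hsi] at this
        exact of_decide_eq_true this
      · have hsi' : σ i = false := by revert hsi; cases σ i <;> simp
        rw [if_neg (by simpa using hsi)]
        have := hdx i
        rw [hsi'] at this
        have hnl := of_decide_eq_false this
        exact lt_of_le_of_ne (not_lt.mp hnl) (hx i)
    have hxA : ((rep C : U) : Fin m → ℝ) ∈ A := hmemA (rep C) (fun i => rfl)
    have hyA : ((rep C' : U) : Fin m → ℝ) ∈ A := hmemA (rep C') hσ'
    -- transfer preconnectedness to the subtype
    have hpre : IsPreconnected A := hconv.isPreconnected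
    have himg : (Subtype.val '' (Subtype.val ⁻¹' A : Set U)) = A := by
      rw [Subtype.image_preimage_coe]
      exact Set.inter_eq_self_of_subset_right hAU
    have hpre' : IsPreconnected (Subtype.val ⁻¹' A : Set U) := by
      rw [← Topology.IsInducing.subtypeVal.isPreconnected_image, himg]
      exact hpre
    have hxs : rep C ∈ (Subtype.val ⁻¹' A : Set U) := hxA
    have hys : rep C' ∈ (Subtype.val ⁻¹' A : Set U) := hyA
    have hsub := hpre'.subset_connectedComponent hxs
    have hconn : connectedComponent (rep C) = connectedComponent (rep C') :=
      connectedComponent_eq (hsub hys)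
    have := ConnectedComponents.coe_eq_coe.mpr hconn
    rw [hrepspec C, hrepspec C'] at this
    exact this
  have hfin : Module.finrank ℝ (Fin m → ℝ) ≤ m := le_of_eq (Module.finrank_fin_fun ℝ)
  calc Nat.card (ConnectedComponents U)
      ≤ Nat.card {σ : Fin n → Bool // ∃ x : Fin m → ℝ, ∀ i, if σ i then 0 < f i x else f i x < 0} :=
        Nat.card_le_card_of_injective F hFinj
    _ ≤ ∑ j ∈ Finset.range (m + 1), n.choose j := sign_count n (Fin m → ℝ) m hfin f
end

section
/- Let s, s' ∈ {0,1}^N be activation states of two analytic cells sharing a common boundary facet contained in the hyperplane {x : a_{lk}^r · x = 0} of the k-th neuron at layer l, where this neuron's hyperplane is the unique arrangement hyperplane containing the facet. Then s and s' differ exactly in the (l,k) coordinate. -/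
open Matrix

noncomputable def relu (t : ℝ) : ℝ := max t 0

noncomputable def mlp (d : ℕ → ℕ)
    (W : ∀ l : ℕ, Matrix (Fin (d (l + 1))) (Fin (d l)) ℝ) :
    (L : ℕ) → (Fin (d 0) → ℝ) → Fin (d L) → ℝ
  | 0, x => x
  | L + 1, x => fun k => relu ((W L).mulVec (mlp d W L x) k)

/-- Masked (region-wise) linear forward pass: rows of inactive neurons are zeroed. -/
noncomputable def mlpLin (d : ℕ → ℕ)
    (W : ∀ l : ℕ, Matrix (Fin (d (l + 1))) (Fin (d l)) ℝ)
    (s : ∀ l : ℕ, Fin (d (l + 1)) → Bool) :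
    (L : ℕ) → (Fin (d 0) → ℝ) → Fin (d L) → ℝ
  | 0, x => x
  | L + 1, x => fun k => if s L k then (W L).mulVec (mlpLin d W s L x) k else 0

/-- Extend a state vector over the `L` hidden layers to all layer indices. -/
def extState (L : ℕ) (d : ℕ → ℕ) (s : ∀ l : Fin L, Fin (d (l.1 + 1)) → Bool) :
    ∀ l : ℕ, Fin (d (l + 1)) → Bool :=
  fun l => if h : l < L then s ⟨l, h⟩ else fun _ => false

/-- The linear functional `a_{lk}^r` of neuron `k` at hidden layer `l+1` under state `s`. -/
noncomputable def neuronFun (L : ℕ) (d : ℕ → ℕ)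
    (W : ∀ l : ℕ, Matrix (Fin (d (l + 1))) (Fin (d l)) ℝ)
    (s : ∀ l : Fin L, Fin (d (l.1 + 1)) → Bool)
    (l : Fin L) (k : Fin (d (l.1 + 1))) (x : Fin (d 0) → ℝ) : ℝ :=
  (W l.1).mulVec (mlpLin d W (extState L d s) l.1 x) k

/-- The analytic cell of the state `s`: the polyhedral set
`{x : (I − 2 diag(s)) A^r x ≤ 0}` where each neuron's linear functional has the sign
prescribed by its state bit. -/
noncomputable def analyticCell (L : ℕ) (d : ℕ → ℕ)
    (W : ∀ l : ℕ, Matrix (Fin (d (l + 1))) (Fin (d l)) ℝ)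
    (s : ∀ l : Fin L, Fin (d (l.1 + 1)) → Bool) : Set (Fin (d 0) → ℝ) :=
  {x | ∀ (l : Fin L) (k : Fin (d (l.1 + 1))),
    (s l k = true → 0 ≤ neuronFun L d W s l k x) ∧
    (s l k = false → neuronFun L d W s l k x ≤ 0)}

lemma mlpLin_eq_mlp (L : ℕ) (d : ℕ → ℕ)
    (W : ∀ l : ℕ, Matrix (Fin (d (l + 1))) (Fin (d l)) ℝ)
    (s : ∀ l : Fin L, Fin (d (l.1 + 1)) → Bool)
    (x : Fin (d 0) → ℝ) (hx : x ∈ analyticCell L d W s) :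
    ∀ m, m ≤ L → mlpLin d W (extState L d s) m x = mlp d W m x := by
  intro m
  induction m with
  | zero => intro _; rfl
  | succ n ih =>
    intro hm
    have hn : n < L := hm
    have hrec := ih (Nat.le_of_lt hn)
    funext k
    have hcell := hx ⟨n, hn⟩ k
    simp only [neuronFun] at hcell
    simp only [mlpLin, mlp, hrec, extState, dif_pos hn] at hcell ⊢
    rcases Bool.eq_false_or_eq_true (s ⟨n, hn⟩ k) with h | h
    · rw [h]
      simp [relu, max_eq_left (hcell.1 h)]
    · rw [h]
      simp [relu, max_eq_right (hcell.2 h)]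

lemma neuronFun_eq (L : ℕ) (d : ℕ → ℕ)
    (W : ∀ l : ℕ, Matrix (Fin (d (l + 1))) (Fin (d l)) ℝ)
    (s s' : ∀ l : Fin L, Fin (d (l.1 + 1)) → Bool)
    (x : Fin (d 0) → ℝ) (hx : x ∈ analyticCell L d W s)
    (hx' : x ∈ analyticCell L d W s')
    (l : Fin L) (k : Fin (d (l.1 + 1))) :
    neuronFun L d W s l k x = neuronFun L d W s' l k x := by
  unfold neuronFun
  rw [mlpLin_eq_mlp L d W s x hx l.1 (Nat.le_of_lt l.2),
    mlpLin_eq_mlp L d W s' x hx' l.1 (Nat.le_of_lt l.2)]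

/-- **State transition across a cell boundary (step 4 of analytic marching).**
If the states `s` and `s'` of two analytic cells share a common boundary facet
`Fset` that is nonempty, relatively open in the hyperplane of neuron `(l0, k0)`,
contained in that neuron's hyperplane, and contained in no other neuron's
hyperplane, then `s` and `s'` differ exactly in the `(l0, k0)` coordinate. -/
theorem adjacent_cells_states_differ_in_one_neuron (L : ℕ) (d : ℕ → ℕ)
    (W : ∀ l : ℕ, Matrix (Fin (d (l + 1))) (Fin (d l)) ℝ)
    (s s' : ∀ l : Fin L, Fin (d (l.1 + 1)) → Bool) (hss : s ≠ s')
    (l0 : Fin L) (k0 : Fin (d (l0.1 + 1)))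
    (Fset : Set (Fin (d 0) → ℝ)) (hne : Fset.Nonempty)
    (hsubs : Fset ⊆ analyticCell L d W s) (hsubs' : Fset ⊆ analyticCell L d W s')
    (hplane : Fset ⊆ {x | neuronFun L d W s l0 k0 x = 0})
    (hrelopen : ∀ x ∈ Fset, Fset ∈ nhdsWithin x {y | neuronFun L d W s l0 k0 y = 0})
    (honly : ∀ p : Σ l : Fin L, Fin (d (l.1 + 1)),
      p ≠ ⟨l0, k0⟩ → ¬ Fset ⊆ {x | neuronFun L d W s p.1 p.2 x = 0}) :
    (∀ p : Σ l : Fin L, Fin (d (l.1 + 1)),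
      p ≠ ⟨l0, k0⟩ → s p.1 p.2 = s' p.1 p.2) ∧ s l0 k0 ≠ s' l0 k0 := by
  have hagree : ∀ p : Σ l : Fin L, Fin (d (l.1 + 1)),
      p ≠ ⟨l0, k0⟩ → s p.1 p.2 = s' p.1 p.2 := by
    intro p hp
    obtain ⟨x, hxF, hxne⟩ : ∃ x ∈ Fset, neuronFun L d W s p.1 p.2 x ≠ 0 := by
      obtain ⟨x, hx1, hx2⟩ := Set.not_subset.mp (honly p hp)
      exact ⟨x, hx1, hx2⟩
    have heq := neuronFun_eq L d W s s' x (hsubs hxF) (hsubs' hxF) p.1 p.2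
    have hc := hsubs hxF p.1 p.2
    have hc' := hsubs' hxF p.1 p.2
    rcases Bool.eq_false_or_eq_true (s p.1 p.2) with h | h <;>
      rcases Bool.eq_false_or_eq_true (s' p.1 p.2) with h' | h' <;>
      rw [h, h']
    · exact absurd (le_antisymm (heq ▸ hc'.2 h') (hc.1 h)) hxne
    · exact absurd (le_antisymm (hc.2 h) (heq ▸ hc'.1 h')) hxne
  refine ⟨hagree, fun h0 => hss ?_⟩
  funext l k
  by_cases hp : (⟨l, k⟩ : Σ l : Fin L, Fin (d (l.1 + 1))) = ⟨l0, k0⟩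
  · obtain ⟨rfl, hk⟩ := Sigma.mk.inj_iff.mp hp
    rw [eq_of_heq hk]; exact h0
  · exact hagree ⟨l, k⟩ hp
end
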